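/- arXiv:2010.04094 — 5 statements merged into one kernel-verified Lean document; each statement's English description precedes it below -/
import Mathlib

section
/- Let u_1,…,u_m be real numbers, not all zero, with I₊ = {i : u_i > 0} and I₋ = {i : u_i < 0}. Then u_1 ⊻⁻ ⋯ ⊻⁻ u_m equals max_{i∈I₊} u_i if I₋ = ∅ or max_{i∈I₋}|u_i| < max_{i∈I₊} u_i; it equals min_{i∈I₋} u_i if I₊ = ∅ or max_{i∈I₊} u_i < max_{i∈I₋}|u_i|; and it equals min_{i∈I₋} u_i if both sets are nonempty and max_{i∈I₋}|u_i| = max_{i∈I₊} u_i. -/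
open scoped Classical

/-- lower regularized idempotent addition -/
noncomputable def smm (u v : ℝ) : ℝ :=
  if |v| < |u| then u else if |u| < |v| then v else min u v

/-- upper regularized idempotent addition -/
noncomputable def smp (u v : ℝ) : ℝ :=
  if |v| < |u| then u else if |u| < |v| then v else max u v

/-- limit idempotent addition ⊞ -/
noncomputable def bp (u v : ℝ) : ℝ :=
  if |v| < |u| then u else if |u| < |v| then v else (u + v) / 2


noncomputable def Ml (l : List ℝ) : ℝ := l.foldr (fun x r => max |x| r) 0

lemma Ml_cons (a : ℝ) (t : List ℝ) : Ml (a :: t) = max |a| (Ml t) := rfl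

lemma Ml_nonneg (l : List ℝ) : 0 ≤ Ml l := by
  induction l with
  | nil => simp [Ml]
  | cons a t ih => rw [Ml_cons]; exact le_max_of_le_right ih

lemma abs_le_Ml (l : List ℝ) : ∀ x ∈ l, |x| ≤ Ml l := by
  induction l with
  | nil => simp
  | cons a t ih =>
    intro x hx
    rw [Ml_cons]
    rcases List.mem_cons.1 hx with h | h
    · exact h ▸ le_max_left _ _
    · exact le_max_of_le_right (ih x h)

lemma foldr_smm (l : List ℝ) :
    l.foldr smm 0 = if -(Ml l) ∈ l then -(Ml l) else Ml l := by
  induction l with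
  | nil => simp [Ml]
  | cons a t ih =>
    have hM0 := Ml_nonneg t
    set M := Ml t with hMdef
    have habsK : |if -M ∈ t then -M else M| = M := by
      split <;> simp [abs_of_nonneg hM0]
    rw [List.foldr_cons, ih, Ml_cons]
    rcases lt_trichotomy |a| M with hlt | heq | hgt
    · -- |a| < M
      have hmax : max |a| M = M := max_eq_right hlt.le
      rw [hmax]
      have hane : a ≠ -M := by
        intro h; rw [h, abs_neg, abs_of_nonneg hM0] at hlt; exact lt_irrefl _ hlt
      have hsm : smm a (if -M ∈ t then -M else M) = (if -M ∈ t then -M else M) := by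
        rw [smm, habsK, if_neg (not_lt.2 hlt.le), if_pos hlt]
      rw [hsm]
      by_cases h : -M ∈ t
      · rw [if_pos h, if_pos (List.mem_cons_of_mem _ h)]
      · have hnc : -M ∉ a :: t := by
          simp only [List.mem_cons]
          push_neg
          exact ⟨fun hh => hane hh.symm, h⟩
        rw [if_neg h, if_neg hnc]
    · -- |a| = M
      have hmax : max |a| M = M := by rw [heq, max_self]
      rw [hmax]
      have hsm : smm a (if -M ∈ t then -M else M) =
          min a (if -M ∈ t then -M else M) := by
        rw [smm, habsK, heq, if_neg (lt_irrefl M), if_neg (lt_irrefl M)]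
      rw [hsm]
      have hage : -M ≤ a := by rw [← heq]; exact neg_abs_le a
      by_cases h : -M ∈ t
      · rw [if_pos h, if_pos (List.mem_cons_of_mem _ h), min_eq_right hage]
      · rw [if_neg h]
        by_cases ha : a = -M
        · rw [if_pos (by simp [ha]), ha, min_eq_left (by linarith)]
        · have hnc : -M ∉ a :: t := by
            simp only [List.mem_cons]
            push_neg
            exact ⟨fun hh => ha hh.symm, h⟩
          rw [if_neg hnc]
          have : a = M := by
            rcases abs_eq (by linarith : (0:ℝ) ≤ M) |>.1 heq with h1 | h1
            · exact h1
            · exact absurd h1 ha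
          rw [this, min_self]
    · -- |a| > M
      have hmax : max |a| M = |a| := max_eq_left hgt.le
      rw [hmax]
      have hsm : smm a (if -M ∈ t then -M else M) = a := by
        rw [smm, habsK, if_pos hgt]
      rw [hsm]
      have hnt : -|a| ∉ t := by
        intro h
        have := abs_le_Ml t _ h
        rw [abs_neg, abs_abs] at this
        exact absurd this (not_le.2 hgt)
      rcases lt_trichotomy a 0 with hneg | hzero | hpos
      · rw [if_pos (List.mem_cons.2 (Or.inl (by rw [abs_of_neg hneg]; ring))),
          abs_of_neg hneg]; ring
      · exfalso; rw [hzero, abs_zero] at hgt; linarith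
      · rw [if_neg (by
          simp only [List.mem_cons]; push_neg
          refine ⟨?_, hnt⟩
          rw [abs_of_pos hpos]; intro hh; linarith),
          abs_of_pos hpos]

lemma Ml_le (l : List ℝ) (c : ℝ) (hc : 0 ≤ c) (h : ∀ x ∈ l, |x| ≤ c) : Ml l ≤ c := by
  induction l with
  | nil => simpa [Ml]
  | cons a t ih =>
    rw [Ml_cons]
    exact max_le (h a (List.mem_cons_self)) (ih fun x hx => h x (List.mem_cons_of_mem _ hx))

lemma mem_ofFn' {m : ℕ} (u : Fin m → ℝ) (i : Fin m) : u i ∈ List.ofFn u := by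
  rw [List.mem_ofFn]; exact ⟨i, rfl⟩

lemma neg_result {m : ℕ} (u : Fin m → ℝ)
    (hm : (Finset.univ.filter fun i => u i < 0).Nonempty)
    (hM : Ml (List.ofFn u) =
      (Finset.univ.filter fun i => u i < 0).sup' hm (fun i => |u i|)) :
    (List.ofFn u).foldr smm 0 = (Finset.univ.filter fun i => u i < 0).inf' hm u := by
  obtain ⟨j, hjmem, hj⟩ := Finset.exists_mem_eq_sup' hm (fun i => |u i|)
  have hjneg : u j < 0 := (Finset.mem_filter.1 hjmem).2
  have huj : u j = -(Ml (List.ofFn u)) := by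
    rw [hM, hj, abs_of_neg hjneg]; ring
  have hmemj : -(Ml (List.ofFn u)) ∈ List.ofFn u := huj ▸ mem_ofFn' u j
  rw [foldr_smm, if_pos hmemj]
  apply le_antisymm
  · apply Finset.le_inf'
    intro i hi
    have hineg : u i < 0 := (Finset.mem_filter.1 hi).2
    have h1 : |u i| ≤ Ml (List.ofFn u) := abs_le_Ml _ _ (mem_ofFn' u i)
    rw [abs_of_neg hineg] at h1
    linarith
  · exact huj ▸ Finset.inf'_le u hjmem

theorem stmt_5 {m : ℕ} (u : Fin m → ℝ) (hu : ∃ i, u i ≠ 0) :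
    (∀ hp : (Finset.univ.filter fun i => 0 < u i).Nonempty,
      ((Finset.univ.filter fun i => u i < 0) = ∅ ∨
        ∀ hm : (Finset.univ.filter fun i => u i < 0).Nonempty,
          (Finset.univ.filter fun i => u i < 0).sup' hm (fun i => |u i|) <
            (Finset.univ.filter fun i => 0 < u i).sup' hp u) →
      (List.ofFn u).foldr smm 0 = (Finset.univ.filter fun i => 0 < u i).sup' hp u) ∧
    (∀ hm : (Finset.univ.filter fun i => u i < 0).Nonempty,
      ((Finset.univ.filter fun i => 0 < u i) = ∅ ∨
        ∀ hp : (Finset.univ.filter fun i => 0 < u i).Nonempty,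
          (Finset.univ.filter fun i => 0 < u i).sup' hp u <
            (Finset.univ.filter fun i => u i < 0).sup' hm (fun i => |u i|)) →
      (List.ofFn u).foldr smm 0 = (Finset.univ.filter fun i => u i < 0).inf' hm u) ∧
    (∀ hp : (Finset.univ.filter fun i => 0 < u i).Nonempty,
      ∀ hm : (Finset.univ.filter fun i => u i < 0).Nonempty,
        (Finset.univ.filter fun i => u i < 0).sup' hm (fun i => |u i|) =
          (Finset.univ.filter fun i => 0 < u i).sup' hp u →
        (List.ofFn u).foldr smm 0 = (Finset.univ.filter fun i => u i < 0).inf' hm u) := by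
  classical
  refine ⟨?_, ?_, ?_⟩
  · -- positive case
    intro hp h
    have hpos : 0 < (Finset.univ.filter fun i => 0 < u i).sup' hp u := by
      obtain ⟨i0, hi0⟩ := hp
      exact lt_of_lt_of_le (Finset.mem_filter.1 hi0).2 (Finset.le_sup' u hi0)
    have habs : ∀ x ∈ List.ofFn u, |x| ≤ (Finset.univ.filter fun i => 0 < u i).sup' hp u := by
      intro x hx
      obtain ⟨i, rfl⟩ := List.mem_ofFn.1 hx
      rcases lt_trichotomy (u i) 0 with hi | hi | hi
      · have him : i ∈ Finset.univ.filter fun i => u i < 0 :=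
          Finset.mem_filter.2 ⟨Finset.mem_univ _, hi⟩
        rcases h with he | hlt
        · exact absurd (he ▸ him) (Finset.notMem_empty i)
        · exact le_of_lt (lt_of_le_of_lt (Finset.le_sup' (fun i => |u i|) him) (hlt ⟨i, him⟩))
      · rw [hi, abs_zero]; exact hpos.le
      · rw [abs_of_pos hi]
        exact Finset.le_sup' u (Finset.mem_filter.2 ⟨Finset.mem_univ _, hi⟩)
    have hMl : Ml (List.ofFn u) = (Finset.univ.filter fun i => 0 < u i).sup' hp u := by
      apply le_antisymm (Ml_le _ _ hpos.le habs)
      obtain ⟨j, hjmem, hj⟩ := Finset.exists_mem_eq_sup' hp u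
      rw [hj]
      exact (le_abs_self _).trans (abs_le_Ml _ _ (mem_ofFn' u j))
    have hnotmem : -(Ml (List.ofFn u)) ∉ List.ofFn u := by
      intro hmem
      obtain ⟨j, hj⟩ := List.mem_ofFn.1 hmem
      have hjneg : u j < 0 := by rw [hj]; rw [hMl] at *; linarith
      have hjm : j ∈ Finset.univ.filter fun i => u i < 0 :=
        Finset.mem_filter.2 ⟨Finset.mem_univ _, hjneg⟩
      rcases h with he | hlt
      · exact absurd (he ▸ hjm) (Finset.notMem_empty j)
      · have h1 : |u j| ≤ (Finset.univ.filter fun i => u i < 0).sup' ⟨j, hjm⟩ (fun i => |u i|) :=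
          Finset.le_sup' (fun i => |u i|) hjm
        have h2 : |u j| = Ml (List.ofFn u) := by
          rw [hj, abs_neg, abs_of_nonneg (Ml_nonneg _)]
        rw [h2, hMl] at h1
        exact absurd (hlt ⟨j, hjm⟩) (not_lt.2 h1)
    rw [foldr_smm, if_neg hnotmem, hMl]
  · -- negative case
    intro hm h
    apply neg_result u hm
    obtain ⟨j0, hj0⟩ := id hm
    have hc0 : (0:ℝ) < (Finset.univ.filter fun i => u i < 0).sup' hm (fun i => |u i|) :=
      lt_of_lt_of_le (abs_pos.2 (ne_of_lt (Finset.mem_filter.1 hj0).2))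
        (Finset.le_sup' (fun i => |u i|) hj0)
    apply le_antisymm
    · apply Ml_le _ _ hc0.le
      intro x hx
      obtain ⟨i, rfl⟩ := List.mem_ofFn.1 hx
      rcases lt_trichotomy (u i) 0 with hi | hi | hi
      · exact Finset.le_sup' (fun i => |u i|) (Finset.mem_filter.2 ⟨Finset.mem_univ _, hi⟩)
      · rw [hi, abs_zero]; exact hc0.le
      · have him : i ∈ Finset.univ.filter fun i => 0 < u i :=
          Finset.mem_filter.2 ⟨Finset.mem_univ _, hi⟩
        rcases h with he | hlt
        · exact absurd (he ▸ him) (Finset.notMem_empty i)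
        · rw [abs_of_pos hi]
          exact le_of_lt (lt_of_le_of_lt (Finset.le_sup' u him) (hlt ⟨i, him⟩))
    · obtain ⟨j, hjmem, hj⟩ := Finset.exists_mem_eq_sup' hm (fun i => |u i|)
      rw [hj]
      exact abs_le_Ml _ _ (mem_ofFn' u j)
  · -- equal case
    intro hp hm heq
    apply neg_result u hm
    obtain ⟨j0, hj0⟩ := id hm
    have hc0 : (0:ℝ) < (Finset.univ.filter fun i => u i < 0).sup' hm (fun i => |u i|) :=
      lt_of_lt_of_le (abs_pos.2 (ne_of_lt (Finset.mem_filter.1 hj0).2))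
        (Finset.le_sup' (fun i => |u i|) hj0)
    apply le_antisymm
    · apply Ml_le _ _ hc0.le
      intro x hx
      obtain ⟨i, rfl⟩ := List.mem_ofFn.1 hx
      rcases lt_trichotomy (u i) 0 with hi | hi | hi
      · exact Finset.le_sup' (fun i => |u i|) (Finset.mem_filter.2 ⟨Finset.mem_univ _, hi⟩)
      · rw [hi, abs_zero]; exact hc0.le
      · rw [abs_of_pos hi, heq]
        exact Finset.le_sup' u (Finset.mem_filter.2 ⟨Finset.mem_univ _, hi⟩)
    · obtain ⟨j, hjmem, hj⟩ := Finset.exists_mem_eq_sup' hm (fun i => |u i|)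
      rw [hj]
      exact abs_le_Ml _ _ (mem_ofFn' u j)
end

section
/- For every x ∈ ℝ^n and every α ∈ ℝ, α · (⊞_{i∈I} x_i) = ⊞_{i∈I} (α x_i), where ⊞_{i∈I} is the n-ary limit operation F_I. -/
open scoped Classical

/-- ξ_I[x](α): signed count of occurrences of α among the x i, i ∈ I. -/
noncomputable def xiF {ι : Type*} (I : Finset ι) (x : ι → ℝ) (α : ℝ) : ℤ :=
  ((I.filter fun i => x i = α).card : ℤ) - ((I.filter fun i => x i = -α).card : ℤ)

/-- the n-ary limit operation F_I, i.e. ⊞_{i∈I} x_i. -/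
noncomputable def FF {ι : Type*} (I : Finset ι) (x : ι → ℝ) : ℝ :=
  if h : (I.filter fun j => xiF I x (x j) ≠ 0).Nonempty then
    if 0 < xiF I x ((I.filter fun j => xiF I x (x j) ≠ 0).sup' h fun i => |x i|) then
      (I.filter fun j => xiF I x (x j) ≠ 0).sup' h x
    else if xiF I x ((I.filter fun j => xiF I x (x j) ≠ 0).sup' h fun i => |x i|) < 0 then
      (I.filter fun j => xiF I x (x j) ≠ 0).inf' h x
    else 0
  else 0

lemma xiF_mul {ι : Type*} (I : Finset ι) (x : ι → ℝ) {α : ℝ} (hα : α ≠ 0) (β : ℝ) :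
    xiF I (fun i => α * x i) (α * β) = xiF I x β := by
  unfold xiF
  have e1 : (I.filter fun i => (fun i => α * x i) i = α * β) = I.filter fun i => x i = β :=
    Finset.filter_congr fun i _ => by
      show α * x i = α * β ↔ x i = β
      exact mul_right_inj' hα
  have e2 : (I.filter fun i => (fun i => α * x i) i = -(α * β)) = I.filter fun i => x i = -β :=
    Finset.filter_congr fun i _ => by
      show α * x i = -(α * β) ↔ x i = -β
      rw [show -(α * β) = α * (-β) by ring]
      exact mul_right_inj' hα
  rw [e1, e2]

lemma xiF_neg {ι : Type*} (I : Finset ι) (x : ι → ℝ) (β : ℝ) :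
    xiF I x (-β) = - xiF I x β := by
  unfold xiF
  rw [neg_neg, neg_sub]

lemma sup'_mul_nonneg {ι : Type*} {J : Finset ι} (h : J.Nonempty) (x : ι → ℝ) {α : ℝ}
    (hα : 0 ≤ α) : J.sup' h (fun i => α * x i) = α * J.sup' h x := by
  exact (Finset.comp_sup'_eq_sup'_comp h (fun t => α * t)
    (fun a b => (mul_max_of_nonneg a b hα))).symm

lemma inf'_mul_nonneg {ι : Type*} {J : Finset ι} (h : J.Nonempty) (x : ι → ℝ) {α : ℝ}
    (hα : 0 ≤ α) : J.inf' h (fun i => α * x i) = α * J.inf' h x := by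
  exact (Finset.apply_inf'_eq_inf'_comp h (fun t => α * t)
    (fun a b => (mul_min_of_nonneg a b hα))).symm

lemma sup'_mul_nonpos {ι : Type*} {J : Finset ι} (h : J.Nonempty) (x : ι → ℝ) {α : ℝ}
    (hα : α ≤ 0) : J.sup' h (fun i => α * x i) = α * J.inf' h x := by
  apply le_antisymm
  · apply Finset.sup'_le; intro i hi
    exact mul_le_mul_of_nonpos_left (Finset.inf'_le _ hi) hα
  · obtain ⟨i, hi, hix⟩ := Finset.exists_mem_eq_inf' h x
    rw [hix]; exact Finset.le_sup' (fun i => α * x i) hi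

lemma inf'_mul_nonpos {ι : Type*} {J : Finset ι} (h : J.Nonempty) (x : ι → ℝ) {α : ℝ}
    (hα : α ≤ 0) : J.inf' h (fun i => α * x i) = α * J.sup' h x := by
  apply le_antisymm
  · obtain ⟨i, hi, hix⟩ := Finset.exists_mem_eq_sup' h x
    rw [hix]; exact Finset.inf'_le (fun i => α * x i) hi
  · apply Finset.le_inf'; intro i hi
    exact mul_le_mul_of_nonpos_left (Finset.le_sup' x hi) hα

theorem stmt_6 {n : ℕ} (x : Fin n → ℝ) (I : Finset (Fin n)) (α : ℝ) :
    α * FF I x = FF I (fun i => α * x i) := by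
  rcases eq_or_ne α 0 with rfl | hα
  · simp only [zero_mul]
    rw [FF, dif_neg]
    simp [Finset.not_nonempty_iff_eq_empty, Finset.filter_eq_empty_iff, xiF]
  -- α ≠ 0
  have hJ : (I.filter fun j => xiF I (fun i => α * x i) ((fun i => α * x i) j) ≠ 0)
      = (I.filter fun j => xiF I x (x j) ≠ 0) := by
    apply Finset.filter_congr; intro j _
    simp only [xiF_mul I x hα]
  unfold FF
  by_cases h : (I.filter fun j => xiF I x (x j) ≠ 0).Nonempty
  · have h' : (I.filter fun j => xiF I (fun i => α * x i) ((fun i => α * x i) j) ≠ 0).Nonempty := by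
      rw [hJ]; exact h
    rw [dif_pos h, dif_pos h']
    set J := I.filter fun j => xiF I x (x j) ≠ 0 with hJdef
    have habs : (I.filter fun j => xiF I (fun i => α * x i) ((fun i => α * x i) j) ≠ 0).sup' h'
        (fun i => |α * x i|) = |α| * J.sup' h (fun i => |x i|) := by
      rw [Finset.sup'_congr h' hJ (fun i _ => rfl)]
      simp only [abs_mul]
      exact sup'_mul_nonneg h _ (abs_nonneg α)
    set M := J.sup' h (fun i => |x i|) with hM
    rcases lt_or_gt_of_ne hα with hneg | hpos
    · -- α < 0
      have h1 : xiF I (fun i => α * x i) (|α| * M) = - xiF I x M := by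
        rw [show |α| * M = α * (-M) by rw [abs_of_neg hneg]; ring, xiF_mul I x hα, xiF_neg]
      rw [habs, h1]
      have hsup : (I.filter fun j => xiF I (fun i => α * x i) ((fun i => α * x i) j) ≠ 0).sup' h'
          (fun i => α * x i) = J.sup' h (fun i => α * x i) :=
        Finset.sup'_congr h' hJ (fun i _ => rfl)
      have hinf : (I.filter fun j => xiF I (fun i => α * x i) ((fun i => α * x i) j) ≠ 0).inf' h'
          (fun i => α * x i) = J.inf' h (fun i => α * x i) :=
        Finset.inf'_congr h' hJ (fun i _ => rfl)
      rcases lt_trichotomy (xiF I x M) 0 with hx0 | hx0 | hx0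
      · rw [if_neg (by omega), if_pos hx0, if_pos (by omega), hsup,
          sup'_mul_nonpos h x hneg.le]
      · rw [if_neg (by omega), if_neg (by omega), if_neg (by omega), if_neg (by omega)]
        ring
      · rw [if_pos hx0, if_neg (by omega), if_pos (by omega), hinf,
          inf'_mul_nonpos h x hneg.le]
    · -- α > 0
      have h1 : xiF I (fun i => α * x i) (|α| * M) = xiF I x M := by
        rw [abs_of_pos hpos, xiF_mul I x hα]
      rw [habs, h1]
      have hsup : (I.filter fun j => xiF I (fun i => α * x i) ((fun i => α * x i) j) ≠ 0).sup' h'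
          (fun i => α * x i) = J.sup' h (fun i => α * x i) :=
        Finset.sup'_congr h' hJ (fun i _ => rfl)
      have hinf : (I.filter fun j => xiF I (fun i => α * x i) ((fun i => α * x i) j) ≠ 0).inf' h'
          (fun i => α * x i) = J.inf' h (fun i => α * x i) :=
        Finset.inf'_congr h' hJ (fun i _ => rfl)
      rcases lt_trichotomy (xiF I x M) 0 with hx0 | hx0 | hx0
      · rw [if_neg (by omega), if_pos hx0, if_neg (by omega), if_pos hx0, hinf,
          inf'_mul_nonneg h x hpos.le]
      · rw [if_neg (by omega), if_neg (by omega), if_neg (by omega), if_neg (by omega)]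
        ring
      · rw [if_pos hx0, if_pos hx0, hsup, sup'_mul_nonneg h x hpos.le]
  · have h' : ¬ (I.filter fun j => xiF I (fun i => α * x i) ((fun i => α * x i) j) ≠ 0).Nonempty := by
      rw [hJ]; exact h
    rw [dif_neg h, dif_neg h']
    ring
end

section
/- Let a ∈ ℝ^n and define f⁻(x) = a₁x₁ ⊻⁻ ⋯ ⊻⁻ aₙxₙ and f⁺(x) = a₁x₁ ⊻⁺ ⋯ ⊻⁺ aₙxₙ. Then {x : f⁻(x) ≤ 0} ∩ {x : f⁺(x) ≥ 0} = {x : f⁻(x) + f⁺(x) = 0}. -/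
open scoped Classical

/-- lower B-form: a₁x₁ ⊻⁻ ⋯ ⊻⁻ aₙxₙ -/
noncomputable def lformM {n : ℕ} (a x : Fin n → ℝ) : ℝ :=
  (List.ofFn fun i => a i * x i).foldr smm 0

/-- upper B-form: a₁x₁ ⊻⁺ ⋯ ⊻⁺ aₙxₙ -/
noncomputable def lformP {n : ℕ} (a x : Fin n → ℝ) : ℝ :=
  (List.ofFn fun i => a i * x i).foldr smp 0

lemma key (l : List ℝ) :
    |l.foldr smm 0| = |l.foldr smp 0| ∧ l.foldr smm 0 ≤ l.foldr smp 0 := by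
  induction l with
  | nil => simp
  | cons u t ih =>
    obtain ⟨habs, hle⟩ := ih
    set vm := t.foldr smm 0
    set vp := t.foldr smp 0
    simp only [List.foldr_cons, smm, smp]
    have habs' : |vp| = |vm| := habs.symm
    rcases lt_trichotomy |vm| |u| with h | h | h
    · rw [if_pos h, if_pos (habs' ▸ h)]
      exact ⟨rfl, le_refl u⟩
    · have e1 : ¬ |vm| < |u| := by rw [h]; exact lt_irrefl _
      have e2 : ¬ |u| < |vm| := by rw [h]; exact lt_irrefl _
      have e3 : ¬ |vp| < |u| := by rw [habs', h]; exact lt_irrefl _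
      have e4 : ¬ |u| < |vp| := by rw [habs', h]; exact lt_irrefl _
      rw [if_neg e1, if_neg e2, if_neg e3, if_neg e4]
      have hvm : |min u vm| = |u| := by
        rcases min_cases u vm with ⟨he, _⟩ | ⟨he, _⟩
        · rw [he]
        · rw [he, h]
      have hvp : |max u vp| = |u| := by
        rcases max_cases u vp with ⟨he, _⟩ | ⟨he, _⟩
        · rw [he]
        · rw [he, habs', h]
      exact ⟨hvm.trans hvp.symm, (min_le_left _ _).trans (le_max_left _ _)⟩
    · rw [if_neg (not_lt.mpr h.le), if_pos h, if_neg (habs' ▸ not_lt.mpr h.le),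
        if_pos (habs' ▸ h)]
      exact ⟨habs, hle⟩

theorem stmt_16 {n : ℕ} (a : Fin n → ℝ) :
    {x : Fin n → ℝ | lformM a x ≤ 0} ∩ {x : Fin n → ℝ | 0 ≤ lformP a x} =
      {x : Fin n → ℝ | lformM a x + lformP a x = 0} := by
  ext x
  obtain ⟨habs, hle⟩ := key (List.ofFn fun i => a i * x i)
  simp only [Set.mem_inter_iff, Set.mem_setOf_eq]
  change |lformM a x| = |lformP a x| at habs
  change lformM a x ≤ lformP a x at hle
  constructor
  · rintro ⟨hm, hp⟩
    have h1 : |lformM a x| = -lformM a x := abs_of_nonpos hm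
    have h2 : |lformP a x| = lformP a x := abs_of_nonneg hp
    rw [h1, h2] at habs; linarith
  · intro h
    constructor <;> linarith
end

section
/- Let a ∈ ℝ^n. The function g(x) = a₁x₁ ⊻⁻ ⋯ ⊻⁻ aₙxₙ on ℝ^n is lower semi-continuous, and it is the largest lower semi-continuous function that is pointwise ≤ the function x ↦ ⊞_{i∈[n]} a_i x_i (i.e., g is the lower semi-continuous regularization of the B-form ⟨a,·⟩_∞). -/
open scoped Classical

lemma smm_eq_left {u v : ℝ} (h : |v| < |u|) : smm u v = u := if_pos h

lemma smm_eq_right {u v : ℝ} (h : |u| < |v|) : smm u v = v := by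
  unfold smm; rw [if_neg (by exact not_lt.2 h.le), if_pos h]

lemma smm_eq_min {u v : ℝ} (h : |u| = |v|) : smm u v = min u v := by
  unfold smm; rw [if_neg (by rw [h]; exact lt_irrefl _), if_neg (by rw [h]; exact lt_irrefl _)]

noncomputable def mA : List ℝ → ℝ
  | [] => 0
  | u :: t => max |u| (mA t)

lemma mA_nil : mA [] = 0 := rfl
lemma mA_cons (u : ℝ) (t : List ℝ) : mA (u :: t) = max |u| (mA t) := rfl

lemma mA_nonneg (l : List ℝ) : 0 ≤ mA l := by
  induction l with
  | nil => rw [mA_nil]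
  | cons u t ih => rw [mA_cons]; exact le_trans ih (le_max_right _ _)

lemma mem_le_mA {u : ℝ} {l : List ℝ} (h : u ∈ l) : |u| ≤ mA l := by
  induction l with
  | nil => simp at h
  | cons v t ih =>
    rw [mA_cons]
    rcases List.mem_cons.1 h with h1 | h2
    · rw [h1]; exact le_max_left _ _
    · exact le_trans (ih h2) (le_max_right _ _)

lemma mA_le {l : List ℝ} {c : ℝ} (h : ∀ u ∈ l, |u| ≤ c) (hc : 0 ≤ c) : mA l ≤ c := by
  induction l with
  | nil => simpa [mA_nil] using hc
  | cons u t ih =>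
    rw [mA_cons]
    exact max_le (h u (by simp)) (ih fun v hv => h v (by simp [hv]))

lemma mA_exists (l : List ℝ) : mA l = 0 ∨ ∃ u ∈ l, |u| = mA l := by
  induction l with
  | nil => left; rfl
  | cons u t ih =>
    rw [mA_cons]
    rcases le_total |u| (mA t) with h | h
    · rw [max_eq_right h]
      rcases ih with h0 | ⟨v, hv, hve⟩
      · left; exact h0
      · right; exact ⟨v, by simp [hv], hve⟩
    · right; exact ⟨u, by simp, (max_eq_left h).symm⟩

lemma abs_smm (u v : ℝ) : |smm u v| = max |u| |v| := by
  rcases lt_trichotomy |u| |v| with h | h | h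
  · rw [smm_eq_right h, max_eq_right h.le]
  · rw [smm_eq_min h]
    rcases min_choice u v with hm | hm <;> rw [hm]
    · exact (max_eq_left h.ge).symm
    · exact (max_eq_right h.le).symm
  · rw [smm_eq_left h, max_eq_left h.le]

lemma smm_or (u v : ℝ) : smm u v = u ∨ smm u v = v := by
  rcases lt_trichotomy |u| |v| with h | h | h
  · exact Or.inr (smm_eq_right h)
  · rw [smm_eq_min h]; exact min_choice u v
  · exact Or.inl (smm_eq_left h)

lemma abs_foldr (l : List ℝ) : |l.foldr smm 0| = mA l := by
  induction l with
  | nil => simp [mA_nil]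
  | cons u t ih => rw [List.foldr_cons, abs_smm, ih, mA_cons]

lemma foldr_mem (l : List ℝ) : l.foldr smm 0 = 0 ∨ l.foldr smm 0 ∈ l := by
  induction l with
  | nil => left; rfl
  | cons u t ih =>
    rw [List.foldr_cons]
    rcases smm_or u (t.foldr smm 0) with h | h
    · right; rw [h]; simp
    · rw [h]
      rcases ih with h0 | hm
      · left; exact h0
      · right; simp [hm]

lemma foldr_neg {l : List ℝ} (hmem : -(mA l) ∈ l) : l.foldr smm 0 = -(mA l) := by
  induction l with
  | nil => exact absurd hmem (by simp)
  | cons u t ih =>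
    set M := mA (u :: t) with hM
    have hMnn : 0 ≤ M := mA_nonneg _
    have habsP : |t.foldr smm 0| = mA t := abs_foldr t
    have hMt : mA t ≤ M := by rw [hM, mA_cons]; exact le_max_right _ _
    have huM : |u| ≤ M := by rw [hM, mA_cons]; exact le_max_left _ _
    have habsM : |(-M)| = M := by rw [abs_neg, abs_of_nonneg hMnn]
    have hPle : |t.foldr smm 0| ≤ M := by rw [habsP]; exact hMt
    rw [List.foldr_cons]
    rcases List.mem_cons.1 hmem with hu | ht
    · rw [← hu]
      rcases lt_or_eq_of_le hPle with hlt | heq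
      · rw [smm_eq_left (by rw [habsM]; exact hlt)]
      · rw [smm_eq_min (by rw [habsM, heq])]
        exact min_eq_left (by linarith [neg_abs_le (t.foldr smm 0)])
    · have hle : M ≤ mA t := by
        have := mem_le_mA ht
        rwa [abs_neg, abs_of_nonneg hMnn] at this
      have hMt2 : mA t = M := le_antisymm hMt hle
      have hP : t.foldr smm 0 = -M := by
        rw [← hMt2]; exact ih (by rw [hMt2]; exact ht)
      rw [hP]
      rcases lt_or_eq_of_le huM with hlt | heq
      · rw [smm_eq_right (by rw [habsM]; exact hlt)]
      · rw [smm_eq_min (by rw [habsM, heq])]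
        exact min_eq_right (by linarith [neg_abs_le u])

lemma FF_cases {ι : Type*} (I : Finset ι) (y : ι → ℝ) :
    FF I y = 0 ∨ ∃ i ∈ I, FF I y = y i := by
  unfold FF
  split_ifs with h h1 h2
  · obtain ⟨b, hb, hbe⟩ := Finset.exists_mem_eq_sup' h y
    exact Or.inr ⟨b, (Finset.mem_filter.1 hb).1, hbe⟩
  · obtain ⟨b, hb, hbe⟩ := Finset.exists_mem_eq_inf' h y
    exact Or.inr ⟨b, (Finset.mem_filter.1 hb).1, hbe⟩
  · exact Or.inl rfl
  · exact Or.inl rfl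

lemma FF_ge {n : ℕ} (y : Fin n → ℝ) (m : ℝ) (hm0 : 0 < m)
    (hle : ∀ j, |y j| ≤ m) (i : Fin n) (hi : y i = m) (hno : ∀ j, y j ≠ -m) :
    m ≤ FF Finset.univ y := by
  have hxi : 0 < xiF Finset.univ y m := by
    unfold xiF
    have h2 : (Finset.univ.filter fun j => y j = -m) = ∅ :=
      Finset.filter_eq_empty_iff.2 (fun j _ => hno j)
    have h1 : 0 < (Finset.univ.filter fun j => y j = m).card :=
      Finset.card_pos.2 ⟨i, Finset.mem_filter.2 ⟨Finset.mem_univ _, hi⟩⟩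
    rw [h2]
    simpa using h1
  have hiS : i ∈ Finset.univ.filter fun j => xiF Finset.univ y (y j) ≠ 0 :=
    Finset.mem_filter.2 ⟨Finset.mem_univ _, by rw [hi]; exact ne_of_gt hxi⟩
  have hS : (Finset.univ.filter fun j => xiF Finset.univ y (y j) ≠ 0).Nonempty := ⟨i, hiS⟩
  have hsup : (Finset.univ.filter fun j => xiF Finset.univ y (y j) ≠ 0).sup' hS
      (fun j => |y j|) = m := by
    apply le_antisymm
    · exact Finset.sup'_le _ _ fun j _ => hle j
    · have := Finset.le_sup' (fun j => |y j|) hiS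
      rwa [hi, abs_of_pos hm0] at this
  unfold FF
  rw [dif_pos hS, hsup, if_pos hxi]
  have := Finset.le_sup' y hiS
  rwa [hi] at this

lemma FF_dom {n : ℕ} (y : Fin n → ℝ) (i0 : Fin n) (hneg : y i0 < 0)
    (hdom : ∀ j, j ≠ i0 → |y j| < |y i0|) : FF Finset.univ y ≤ y i0 := by
  have habs : |y i0| = -(y i0) := abs_of_neg hneg
  have hkey : ∀ j, |y j| = |y i0| → j = i0 := by
    intro j hj
    by_contra hne
    exact absurd hj (ne_of_lt (hdom j hne))
  have hfilt1 : (Finset.univ.filter fun j => y j = y i0) = {i0} := by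
    apply Finset.eq_singleton_iff_unique_mem.2
    constructor
    · exact Finset.mem_filter.2 ⟨Finset.mem_univ _, rfl⟩
    · intro j hj
      exact hkey j (by rw [(Finset.mem_filter.1 hj).2])
  have hfilt2 : (Finset.univ.filter fun j => y j = -(y i0)) = ∅ := by
    apply Finset.filter_eq_empty_iff.2
    intro j _
    intro hj
    have := hkey j (by rw [hj, abs_neg])
    rw [this] at hj
    linarith
  have hxi1 : xiF Finset.univ y (y i0) = 1 := by
    unfold xiF
    rw [hfilt1, hfilt2]
    simp
  have hxi2 : xiF Finset.univ y (-(y i0)) = -1 := by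
    unfold xiF
    rw [neg_neg, hfilt1, hfilt2]
    simp
  have hiS : i0 ∈ Finset.univ.filter fun j => xiF Finset.univ y (y j) ≠ 0 :=
    Finset.mem_filter.2 ⟨Finset.mem_univ _, by rw [hxi1]; exact one_ne_zero⟩
  have hS : (Finset.univ.filter fun j => xiF Finset.univ y (y j) ≠ 0).Nonempty := ⟨i0, hiS⟩
  have hsup : (Finset.univ.filter fun j => xiF Finset.univ y (y j) ≠ 0).sup'
      hS (fun j => |y j|) = -(y i0) := by
    apply le_antisymm
    · refine Finset.sup'_le _ _ fun j _ => ?_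
      rcases eq_or_ne j i0 with rfl | hne
      · rw [habs]
      · rw [← habs]; exact (hdom j hne).le
    · have := Finset.le_sup' (fun j => |y j|) hiS
      rwa [habs] at this
  unfold FF
  rw [dif_pos hS, hsup, if_neg (by rw [hxi2]; norm_num), if_pos (by rw [hxi2]; norm_num)]
  exact Finset.inf'_le y hiS

lemma lformM_cases {n : ℕ} (a x : Fin n → ℝ) :
    lformM a x = mA (List.ofFn fun i => a i * x i) ∨
    lformM a x = -(mA (List.ofFn fun i => a i * x i)) :=
  (abs_eq (mA_nonneg _)).1 (abs_foldr _)

theorem stmt_17 {n : ℕ} (a : Fin n → ℝ) :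
    LowerSemicontinuous (fun x : Fin n → ℝ => lformM a x) ∧
    (∀ x : Fin n → ℝ, lformM a x ≤ FF Finset.univ (fun i => a i * x i)) ∧
    (∀ h : (Fin n → ℝ) → ℝ, LowerSemicontinuous h →
      (∀ x, h x ≤ FF Finset.univ (fun i => a i * x i)) →
      ∀ x, h x ≤ lformM a x) := by
  have hlf : ∀ x : Fin n → ℝ, lformM a x = (List.ofFn fun i => a i * x i).foldr smm 0 :=
    fun _ => rfl
  have hmemA : ∀ (x : Fin n → ℝ) (i : Fin n),
      |a i * x i| ≤ mA (List.ofFn fun j => a j * x j) :=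
    fun x i => mem_le_mA (List.mem_ofFn.2 ⟨i, rfl⟩)
  have hexA : ∀ x : Fin n → ℝ, mA (List.ofFn fun i => a i * x i) ≠ 0 →
      ∃ i, |a i * x i| = mA (List.ofFn fun j => a j * x j) := by
    intro x hne
    rcases mA_exists (List.ofFn fun i => a i * x i) with h0 | ⟨u, hu, hue⟩
    · exact absurd h0 hne
    · obtain ⟨i, hi⟩ := List.mem_ofFn.1 hu
      exact ⟨i, by rw [hi, hue]⟩
  have hnegA : ∀ (x : Fin n → ℝ) (i : Fin n),
      a i * x i = -(mA (List.ofFn fun j => a j * x j)) →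
      lformM a x = -(mA (List.ofFn fun j => a j * x j)) := by
    intro x i hi
    exact foldr_neg (List.mem_ofFn.2 ⟨i, hi⟩)
  have hmemF : ∀ x : Fin n → ℝ, lformM a x ≠ 0 → ∃ i, a i * x i = lformM a x := by
    intro x hne
    rcases foldr_mem (List.ofFn fun i => a i * x i) with h0 | hmem
    · exact absurd ((hlf x).trans h0) hne
    · rw [← hlf x] at hmem
      exact List.mem_ofFn.1 hmem
  have hev : ∀ (x : Fin n → ℝ) (δ : ℝ), 0 < δ →
      ∀ᶠ x' in nhds x, ∀ i, |a i * x' i - a i * x i| < δ := by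
    intro x δ hδ
    rw [Filter.eventually_all]
    intro i
    have hc : Continuous fun x' : Fin n → ℝ => a i * x' i :=
      continuous_const.mul (continuous_apply i)
    exact (hc.tendsto x).eventually (by
      filter_upwards [Metric.ball_mem_nhds (a i * x i) hδ] with u hu
      rwa [Metric.mem_ball, Real.dist_eq] at hu)
  refine ⟨?_, ?_, ?_⟩
  · -- lower semicontinuity
    intro x z hz
    simp only at hz ⊢
    have hmnn : 0 ≤ mA (List.ofFn fun i => a i * x i) := mA_nonneg _
    by_cases hzm : z < -(mA (List.ofFn fun i => a i * x i))
    · set ε := (-(mA (List.ofFn fun i => a i * x i)) - z) / 2 with hε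
      have hεpos : 0 < ε := by rw [hε]; linarith
      filter_upwards [hev x ε hεpos] with x' hx'
      have hup : mA (List.ofFn fun i => a i * x' i) ≤
          mA (List.ofFn fun i => a i * x i) + ε := by
        apply mA_le _ (by linarith)
        intro u hu
        obtain ⟨i, hi⟩ := List.mem_ofFn.1 hu
        rw [← hi]
        have h1 := hx' i
        have h2 := hmemA x i
        have h3 := abs_sub_abs_le_abs_sub (a i * x' i) (a i * x i)
        linarith
      have habs' : |lformM a x'| = mA (List.ofFn fun i => a i * x' i) := abs_foldr _
      have h4 := neg_abs_le (lformM a x')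
      linarith
    · push_neg at hzm
      have hgm : lformM a x = mA (List.ofFn fun i => a i * x i) := by
        rcases lformM_cases a x with h | h
        · exact h
        · rw [h] at hz; linarith
      have hmpos : 0 < mA (List.ofFn fun i => a i * x i) := by
        rw [hgm] at hz; linarith
      have hno : ∀ i, a i * x i ≠ -(mA (List.ofFn fun j => a j * x j)) := by
        intro i hi
        have := hnegA x i hi
        rw [hgm] at this; linarith
      obtain ⟨i1, hi1⟩ := hexA x (by linarith)
      have hne : (Finset.univ : Finset (Fin n)).Nonempty := ⟨i1, Finset.mem_univ _⟩
      set δ0 := Finset.univ.inf' hne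
        (fun i => a i * x i + mA (List.ofFn fun j => a j * x j)) with hδ0def
      have hδ0 : 0 < δ0 := by
        rw [hδ0def, Finset.lt_inf'_iff]
        intro i _
        have h1 : -(mA (List.ofFn fun j => a j * x j)) ≤ a i * x i := by
          have := neg_abs_le (a i * x i); have := hmemA x i; linarith
        rcases lt_or_eq_of_le h1 with h | h
        · linarith
        · exact absurd h.symm (hno i)
      set δ := min (δ0 / 2) ((mA (List.ofFn fun i => a i * x i) - z) / 2) with hδdef
      have hδ : 0 < δ := by
        rw [hδdef]
        apply lt_min
        · linarith
        · rw [hgm] at hz; linarith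
      have hd2 : δ ≤ δ0 / 2 := min_le_left _ _
      have hd3 : δ ≤ (mA (List.ofFn fun i => a i * x i) - z) / 2 := min_le_right _ _
      filter_upwards [hev x δ hδ] with x' hx'
      have hm'nn : 0 ≤ mA (List.ofFn fun i => a i * x' i) := mA_nonneg _
      have hm'ge : mA (List.ofFn fun i => a i * x i) - δ ≤
          mA (List.ofFn fun i => a i * x' i) := by
        have h1 := hx' i1
        have h2 := hmemA x' i1
        have h3 := abs_sub_abs_le_abs_sub (a i1 * x i1) (a i1 * x' i1)
        rw [abs_sub_comm] at h3
        linarith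
      rcases lformM_cases a x' with h | h
      · rw [h]; linarith
      · by_cases h0 : lformM a x' = 0
        · rw [h0]
          have : mA (List.ofFn fun i => a i * x' i) = 0 := by
            rw [← abs_foldr (List.ofFn fun i => a i * x' i), ← hlf x', h0, abs_zero]
          linarith
        · obtain ⟨j, hj⟩ := hmemF x' h0
          exfalso
          have h1 : δ0 ≤ a j * x j + mA (List.ofFn fun i => a i * x i) :=
            Finset.inf'_le _ (Finset.mem_univ j)
          have h2 := hx' j
          rw [hj, h] at h2
          rw [abs_lt] at h2
          linarith
  · -- lformM ≤ FF
    intro x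
    have hmnn : 0 ≤ mA (List.ofFn fun i => a i * x i) := mA_nonneg _
    have hFFge : -(mA (List.ofFn fun i => a i * x i)) ≤
        FF Finset.univ (fun i => a i * x i) := by
      rcases FF_cases Finset.univ (fun i => a i * x i) with h' | ⟨i, _, h'⟩
      · rw [h']; linarith
      · have h1 : FF Finset.univ (fun i => a i * x i) = a i * x i := h'
        have := neg_abs_le (a i * x i); have h2 := hmemA x i
        rw [h1]; linarith
    rcases lformM_cases a x with hg | hg
    · rw [hg]
      by_cases hm0 : mA (List.ofFn fun i => a i * x i) = 0
      · rw [hm0]; rw [hm0] at hFFge; linarith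
      · have hmpos : 0 < mA (List.ofFn fun i => a i * x i) :=
          lt_of_le_of_ne hmnn (Ne.symm hm0)
        have hno : ∀ i, a i * x i ≠ -(mA (List.ofFn fun j => a j * x j)) := by
          intro i hi
          have := hnegA x i hi
          rw [hg] at this; linarith
        obtain ⟨i1, hi1⟩ := hexA x hm0
        have hi1' : a i1 * x i1 = mA (List.ofFn fun j => a j * x j) := by
          rcases (abs_eq hmnn).1 hi1 with h | h
          · exact h
          · exact absurd h (hno i1)
        exact FF_ge (fun i => a i * x i) _ hmpos (fun j => hmemA x j) i1 hi1' hno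
    · rw [hg]; exact hFFge
  · -- maximality
    intro h hLSC hle x
    have hmnn : 0 ≤ mA (List.ofFn fun i => a i * x i) := mA_nonneg _
    have hFFle : FF Finset.univ (fun i => a i * x i) ≤
        mA (List.ofFn fun i => a i * x i) := by
      rcases FF_cases Finset.univ (fun i => a i * x i) with h' | ⟨i, _, h'⟩
      · rw [h']; exact hmnn
      · have h1 : FF Finset.univ (fun i => a i * x i) = a i * x i := h'
        have := le_abs_self (a i * x i); have h2 := hmemA x i
        rw [h1]; linarith
    rcases lformM_cases a x with hg | hg
    · rw [hg]; exact (hle x).trans hFFle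
    · by_cases hm0 : mA (List.ofFn fun i => a i * x i) = 0
      · rw [hg, hm0, neg_zero]
        have := (hle x).trans hFFle
        rw [hm0] at this; exact this
      · have hmpos : 0 < mA (List.ofFn fun i => a i * x i) :=
          lt_of_le_of_ne hmnn (Ne.symm hm0)
        obtain ⟨i0, hi0⟩ := hmemF x (by
          intro h0
          rw [h0] at hg
          exact hm0 (by linarith [hg]))
        rw [hg] at hi0
        have ha0 : a i0 ≠ 0 := by
          intro h0
          rw [h0, zero_mul] at hi0
          linarith [hi0.symm]
        rw [hg]
        by_contra hcon
        push_neg at hcon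
        have hev' := hLSC x (-(mA (List.ofFn fun i => a i * x i))) hcon
        rw [Metric.eventually_nhds_iff] at hev'
        obtain ⟨δ, hδ, hball⟩ := hev'
        have hapos : 0 < |a i0| := abs_pos.2 ha0
        set s := δ * |a i0| / 2 with hs
        have hspos : 0 < s := by rw [hs]; positivity
        set x' := Function.update x i0 (x i0 - s / a i0) with hx'
        have hx'i0 : x' i0 = x i0 - s / a i0 := by rw [hx', Function.update_self]
        have hx'ne : ∀ j, j ≠ i0 → x' j = x j := by
          intro j hne; rw [hx', Function.update_of_ne hne]
        have hdist : dist x' x < δ := by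
          rw [dist_pi_lt_iff hδ]
          intro i
          rcases eq_or_ne i i0 with rfl | hne
          · rw [hx'i0, Real.dist_eq]
            have he : x i - s / a i - x i = -(s / a i) := by ring
            rw [he, abs_neg, abs_div]
            rw [abs_of_pos hspos, div_lt_iff₀ hapos, hs]
            nlinarith [mul_pos hδ hapos]
          · rw [hx'ne i hne, dist_self]; exact hδ
        have h1 : -(mA (List.ofFn fun i => a i * x i)) < h x' := hball hdist
        have hy'0 : a i0 * x' i0 = -(mA (List.ofFn fun i => a i * x i)) - s := by
          rw [hx'i0, mul_sub, hi0, mul_div_cancel₀ _ ha0]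
        have hneg : a i0 * x' i0 < 0 := by rw [hy'0]; linarith
        have hdom : ∀ j, j ≠ i0 → |a j * x' j| < |a i0 * x' i0| := by
          intro j hne
          rw [hx'ne j hne, hy'0]
          have h3 := hmemA x j
          have he : |(-(mA (List.ofFn fun i => a i * x i)) - s)| =
              mA (List.ofFn fun i => a i * x i) + s := by
            rw [abs_of_nonpos (by linarith)]; ring
          rw [he]
          linarith
        have hFF := FF_dom (fun i => a i * x' i) i0 hneg hdom
        have h2 := hle x'
        have h3 : FF Finset.univ (fun i => a i * x' i) ≤ a i0 * x' i0 := hFF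
        rw [hy'0] at h3
        linarith
end

section
/- Let A be an n×n matrix with nonnegative entries and b ∈ ℝ^n with all entries strictly positive. Suppose there exists a permutation σ of [n] such that for every i, a_{i,σ(i)} > 0 and b_i > max_{j ≠ i} a_{i,σ(j)} · b_j / a_{j,σ(j)}. Then the limit determinant |A|_∞ = ⊞_{π∈S_n} sgn(π)Π_i a_{i,π(i)} is nonzero; in fact |A|_∞ = sgn(σ)·Π_{j∈[n]} a_{j,σ(j)} with appropriate normalization argument, and in particular |A|_∞ ≠ 0. -/
open scoped Classical

/-- determinant in limit -/
noncomputable def detInf {n : ℕ} (A : Matrix (Fin n) (Fin n) ℝ) : ℝ :=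
  FF Finset.univ fun σ : Equiv.Perm (Fin n) =>
    ((Equiv.Perm.sign σ : ℤ) : ℝ) * ∏ i, A i (σ i)

lemma FF_eq_unique_max {ι : Type*} (I : Finset ι) (x : ι → ℝ) (i₀ : ι)
    (hi₀ : i₀ ∈ I) (hx0 : x i₀ ≠ 0)
    (hmax : ∀ j ∈ I, j ≠ i₀ → |x j| < |x i₀|) : FF I x = x i₀ := by
  have hfilt1 : I.filter (fun i => x i = x i₀) = {i₀} := by
    ext j
    simp only [Finset.mem_filter, Finset.mem_singleton]
    constructor
    · rintro ⟨hj, hxj⟩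
      by_contra hne
      have := hmax j hj hne
      rw [hxj] at this
      exact lt_irrefl _ this
    · rintro rfl; exact ⟨hi₀, rfl⟩
  have hfilt2 : I.filter (fun i => x i = -x i₀) = ∅ := by
    rw [Finset.filter_eq_empty_iff]
    intro j hj hxj
    rcases eq_or_ne j i₀ with rfl | hne
    · exact hx0 (by linarith [hxj])
    · have := hmax j hj hne
      rw [hxj, abs_neg] at this
      exact lt_irrefl _ this
  have hxi1 : xiF I x (x i₀) = 1 := by
    simp [xiF, hfilt1, hfilt2]
  have hxineg : xiF I x (-x i₀) = -1 := by
    simp only [xiF, neg_neg, hfilt1, hfilt2]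
    simp
  set S := I.filter (fun j => xiF I x (x j) ≠ 0) with hS
  have hSi₀ : i₀ ∈ S := by
    rw [hS, Finset.mem_filter]
    exact ⟨hi₀, by rw [hxi1]; exact one_ne_zero⟩
  have h : S.Nonempty := ⟨i₀, hSi₀⟩
  have habs_le : ∀ j ∈ S, |x j| ≤ |x i₀| := by
    intro j hj
    rw [hS, Finset.mem_filter] at hj
    rcases eq_or_ne j i₀ with rfl | hne
    · exact le_rfl
    · exact le_of_lt (hmax j hj.1 hne)
  have hsup : S.sup' h (fun i => |x i|) = |x i₀| :=
    le_antisymm (Finset.sup'_le _ _ habs_le) (Finset.le_sup' (fun i => |x i|) hSi₀)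
  rw [FF, dif_pos h]
  rw [hsup]
  rcases lt_or_gt_of_ne hx0 with hneg | hpos
  · have habs : |x i₀| = -x i₀ := abs_of_neg hneg
    rw [habs, hxineg]
    rw [if_neg (by norm_num), if_pos (by norm_num)]
    refine le_antisymm (Finset.inf'_le x hSi₀) (Finset.le_inf' h x ?_)
    intro j hj
    have h1 : -|x j| ≤ x j := neg_abs_le _
    have h2 : |x j| ≤ |x i₀| := habs_le j hj
    have h3 : |x i₀| = -x i₀ := habs
    linarith
  · have habs : |x i₀| = x i₀ := abs_of_pos hpos
    rw [habs, hxi1, if_pos (by norm_num)]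
    refine le_antisymm (Finset.sup'_le h x ?_) (Finset.le_sup' _ hSi₀)
    intro j hj
    have h1 : x j ≤ |x j| := le_abs_self _
    have h2 : |x j| ≤ |x i₀| := habs_le j hj
    linarith

theorem stmt_18 {n : ℕ} (A : Matrix (Fin n) (Fin n) ℝ) (b : Fin n → ℝ)
    (hA : ∀ i j, 0 ≤ A i j) (hb : ∀ i, 0 < b i) (σ : Equiv.Perm (Fin n))
    (hσ : ∀ i, 0 < A i (σ i))
    (hdom : ∀ i j, j ≠ i → A i (σ j) * b j / A j (σ j) < b i) :
    detInf A = ((Equiv.Perm.sign σ : ℤ) : ℝ) * ∏ j, A j (σ j) ∧ detInf A ≠ 0 := by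
  set x : Equiv.Perm (Fin n) → ℝ :=
    fun π => ((Equiv.Perm.sign π : ℤ) : ℝ) * ∏ i, A i (π i) with hxdef
  have hsignabs : ∀ π : Equiv.Perm (Fin n), |((Equiv.Perm.sign π : ℤ) : ℝ)| = 1 := by
    intro π
    rcases Int.units_eq_one_or (Equiv.Perm.sign π) with h | h <;> rw [h] <;> norm_num
  have habs : ∀ π : Equiv.Perm (Fin n), |x π| = ∏ i, A i (π i) := by
    intro π
    rw [hxdef]
    rw [abs_mul, hsignabs, one_mul, abs_of_nonneg (Finset.prod_nonneg fun i _ => hA i (π i))]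
  have hprodpos : 0 < ∏ j, A j (σ j) := Finset.prod_pos fun i _ => hσ i
  have hxσ : x σ ≠ 0 := by
    intro h0
    have := habs σ
    rw [h0, abs_zero] at this
    exact absurd this.symm (ne_of_gt hprodpos)
  -- key inequality
  have hkey : ∀ π : Equiv.Perm (Fin n), π ≠ σ → ∏ i, A i (π i) < ∏ j, A j (σ j) := by
    intro π hπ
    set ρ : Equiv.Perm (Fin n) := σ⁻¹ * π with hρdef
    have hπρ : ∀ i, π i = σ (ρ i) := by
      intro i
      simp [hρdef, Equiv.Perm.mul_apply]
    have hρne : ∃ i, ρ i ≠ i := by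
      by_contra hall
      push_neg at hall
      apply hπ
      ext i
      rw [hπρ i, hall i]
    obtain ⟨i₁, hi₁⟩ := hρne
    set g : Fin n → ℝ := fun i => b i * A (ρ i) (σ (ρ i)) / b (ρ i) with hgdef
    have hgpos : ∀ i, 0 < g i := fun i =>
      div_pos (mul_pos (hb i) (hσ (ρ i))) (hb (ρ i))
    have hle : ∀ i, ρ i ≠ i → A i (π i) < g i := by
      intro i hne
      have hd := hdom i (ρ i) hne
      rw [div_lt_iff₀ (hσ (ρ i))] at hd
      rw [hπρ i, hgdef, lt_div_iff₀ (hb (ρ i))]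
      linarith
    have hle' : ∀ i, A i (π i) ≤ g i := by
      intro i
      rcases eq_or_ne (ρ i) i with he | hne
      · rw [hπρ i, hgdef]
        simp only [he]
        rw [mul_comm, mul_div_assoc, div_self (ne_of_gt (hb i)), mul_one]
      · exact le_of_lt (hle i hne)
    have hprodg : ∏ i, g i = ∏ j, A j (σ j) := by
      rw [hgdef]
      rw [show (fun i => b i * A (ρ i) (σ (ρ i)) / b (ρ i)) =
        (fun i => b i * (A (ρ i) (σ (ρ i)) / b (ρ i))) from funext fun i => by ring]
      rw [Finset.prod_mul_distrib, Finset.prod_div_distrib]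
      rw [Equiv.prod_comp ρ (fun j => A j (σ j)), Equiv.prod_comp ρ b]
      have hbpos : (0:ℝ) < ∏ i, b i := Finset.prod_pos fun i _ => hb i
      field_simp
    calc ∏ i, A i (π i) < ∏ i, g i := by
          rcases Classical.em (∀ i, 0 < A i (π i)) with hall | hnall
          · exact Finset.prod_lt_prod (fun i _ => hall i) (fun i _ => hle' i)
              ⟨i₁, Finset.mem_univ i₁, hle i₁ hi₁⟩
          · push_neg at hnall
            obtain ⟨i₂, hi₂⟩ := hnall
            have hz : A i₂ (π i₂) = 0 := le_antisymm hi₂ (hA i₂ (π i₂))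
            have : ∏ i, A i (π i) = 0 :=
              Finset.prod_eq_zero (Finset.mem_univ i₂) hz
            rw [this]
            exact Finset.prod_pos fun i _ => hgpos i
      _ = ∏ j, A j (σ j) := hprodg
  have hFF : detInf A = x σ := by
    rw [detInf]
    apply FF_eq_unique_max _ _ σ (Finset.mem_univ σ) hxσ
    intro π _ hπ
    rw [habs π, habs σ]
    exact hkey π hπ
  exact ⟨hFF, hFF ▸ hxσ⟩
end
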